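/- Let ω be a multiplicative function on permutations. Let γ̄_n = ∑_{π ∈ S_n} ω(π) q^{Ī(π)} where Ī(π) is the number of non-inversions of π, f̄_n = ∑_{β ∈ B_n} ω(β) q^{Ī(β)} where B_n is the set of basic permutations of {1,...,n} (those beginning with their greatest element), and F̄(t) = ∑_{n≥1} f̄_n t^n/[n]_q!. Then ∑_{n≥0} γ̄_n t^n/[n]_q! = E_q[F̄(t)]*_q. -/

import Mathlib

/-- The q-integer `[n]_q = 1 + q + ... + q^{n-1}`. -/
noncomputable def qInt {K : Type*} [CommRing K] (q : K) (n : ℕ) : K :=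
  ∑ i ∈ Finset.range n, q ^ i

/-- The q-factorial `[n]_q!`. -/
noncomputable def qFact {K : Type*} [CommRing K] (q : K) (n : ℕ) : K :=
  ∏ i ∈ Finset.range n, qInt q (i + 1)

/-- The q-derivative `D_q F(t) = (F(qt) - F(t))/((q-1)t)`. -/
noncomputable def qDeriv {K : Type*} [CommRing K] (q : K) (F : PowerSeries K) :
    PowerSeries K :=
  PowerSeries.mk fun n => qInt q (n + 1) * PowerSeries.coeff (n + 1) F

/-- The reduction `red(π)` of a word: the `i`-th smallest letter is replaced by `i`. -/
def redList (l : List ℕ) : List ℕ :=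
  l.map fun a => (l.filter fun b => decide (b < a)).length + 1

/-- The number of non-inversions of the word `a₁⋯aₙ`: pairs `(i,j)` with `i < j`
and `a_i < a_j`. -/
def noninvCount : List ℕ → ℕ
  | [] => 0
  | a :: l => (l.countP fun b => decide (a < b)) + noninvCount l

/-- The basic decomposition of a word (of distinct letters): factor at each
left-to-right maximum, so that each block begins with its greatest element. -/
def basicBlocks : List ℕ → List (List ℕ)
  | [] => []
  | a :: l =>
      (a :: l.takeWhile fun b => decide (b < a)) ::
        basicBlocks (l.dropWhile fun b => decide (b < a))
termination_by l => l.length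
decreasing_by
  simpa using Nat.lt_succ_of_le (List.Sublist.length_le (List.dropWhile_sublist _))

/-- The word `a₁⋯aₙ` (with letters in `{1,…,n}`) of a permutation `π ∈ Sₙ`. -/
def wordOf {n : ℕ} (π : Equiv.Perm (Fin n)) : List ℕ :=
  List.ofFn fun i => (π i : ℕ) + 1





@[simp] lemma basicBlocks_nil : basicBlocks [] = [] := by rw [basicBlocks]

@[simp] lemma basicBlocks_cons (a : ℕ) (l : List ℕ) :
    basicBlocks (a :: l) = (a :: l.takeWhile fun b => decide (b < a)) ::
        basicBlocks (l.dropWhile fun b => decide (b < a)) := by rw [basicBlocks]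

lemma noninv_append (u x : List ℕ) :
    noninvCount (u ++ x) = noninvCount u + noninvCount x +
      (u.map fun a => x.countP fun b => decide (a < b)).sum := by
  induction u with
  | nil => simp [noninvCount]
  | cons a u ih =>
      simp only [List.cons_append, noninvCount, List.countP_append, List.map_cons,
        List.sum_cons]
      rw [ih]
      omega

lemma takeWhile_append_mid (p : ℕ → Bool) (u v : List ℕ) (M : ℕ) (hM : p M = false) :
    (u ++ M :: v).takeWhile p = u.takeWhile p ∧
    (u ++ M :: v).dropWhile p = u.dropWhile p ++ M :: v := by
  induction u with
  | nil => simp [List.takeWhile_cons, List.dropWhile_cons, hM]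
  | cons a u ih =>
      by_cases h : p a <;>
        simp [List.takeWhile_cons, List.dropWhile_cons, h, ih.1, ih.2]

lemma basicBlocks_append (M : ℕ) : ∀ (u : List ℕ), ∀ (v : List ℕ),
    (∀ a ∈ u, a < M) → (∀ b ∈ v, b < M) →
    basicBlocks (u ++ M :: v) = basicBlocks u ++ [M :: v]
  | [], v, _, hv => by
      have ht : (v.takeWhile fun b => decide (b < M)) = v :=
        List.takeWhile_eq_self_iff.mpr (by simpa using hv)
      have hd : (v.dropWhile fun b => decide (b < M)) = [] :=
        List.dropWhile_eq_nil_iff.mpr (by simpa using hv)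
      simp [ht, hd]
  | a :: u, v, hu, hv => by
      have haM : a < M := hu a (by simp)
      have hM : (fun b => decide (b < a)) M = false := by
        simp only [decide_eq_false_iff_not, not_lt]; omega
      have htd := takeWhile_append_mid (fun b => decide (b < a)) u v M hM
      rw [List.cons_append, basicBlocks_cons, htd.1, htd.2, basicBlocks_cons]
      rw [basicBlocks_append M (u.dropWhile fun b => decide (b < a)) v
        (fun x hx => hu x (List.mem_cons_of_mem _ ((List.dropWhile_sublist _).mem hx))) hv]
      simp
termination_by u => u.length
decreasing_by
  simpa using Nat.lt_succ_of_le (List.Sublist.length_le (List.dropWhile_sublist _))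

lemma noninvCount_map (g : ℕ → ℕ) :
    ∀ (l : List ℕ), (∀ a ∈ l, ∀ b ∈ l, (a < b ↔ g a < g b)) →
    noninvCount (l.map g) = noninvCount l := by
  intro l
  induction l with
  | nil => intro; rfl
  | cons a l ih =>
      intro h
      simp only [List.map_cons, noninvCount, List.countP_map]
      rw [ih fun x hx y hy => h x (List.mem_cons_of_mem _ hx) y (List.mem_cons_of_mem _ hy)]
      congr 1
      apply List.countP_congr
      intro b hb
      simp only [Function.comp]
      simpa using (h a (by simp) b (List.mem_cons_of_mem _ hb)).symm

def rankIn (A : Finset ℕ) (a : ℕ) : ℕ := (A.filter (fun b => b < a)).card + 1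

lemma rankIn_lt_rankIn {A : Finset ℕ} {a b : ℕ} (ha : a ∈ A) (hab : a < b) :
    rankIn A a < rankIn A b := by
  have hss : A.filter (fun x => x < a) ⊂ A.filter (fun x => x < b) := by
    constructor
    · intro x hx
      simp only [Finset.mem_filter] at hx ⊢
      exact ⟨hx.1, by omega⟩
    · intro hsub
      have := hsub (Finset.mem_filter.mpr ⟨ha, hab⟩)
      simp at this
  exact Nat.add_lt_add_right (Finset.card_lt_card hss) 1

lemma rankIn_iff {A : Finset ℕ} {a b : ℕ} (ha : a ∈ A) (hb : b ∈ A) :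
    a < b ↔ rankIn A a < rankIn A b := by
  constructor
  · exact rankIn_lt_rankIn ha
  · intro h
    rcases lt_trichotomy a b with h1 | h1 | h1
    · exact h1
    · exact absurd h (by simp [h1])
    · exact absurd (rankIn_lt_rankIn hb h1) (by omega)

lemma rankIn_injOn {A : Finset ℕ} {a b : ℕ} (ha : a ∈ A) (hb : b ∈ A)
    (h : rankIn A a = rankIn A b) : a = b := by
  rcases lt_trichotomy a b with h1 | h1 | h1
  · exact absurd (rankIn_lt_rankIn ha h1) (by omega)
  · exact h1
  · exact absurd (rankIn_lt_rankIn hb h1) (by omega)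

lemma rankIn_mem {A : Finset ℕ} {a : ℕ} (ha : a ∈ A) :
    rankIn A a ∈ Finset.Icc 1 A.card := by
  have hsub : A.filter (fun b => b < a) ⊆ A.erase a := by
    intro x hx
    simp only [Finset.mem_filter] at hx
    exact Finset.mem_erase.mpr ⟨by omega, hx.1⟩
  have h1 := Finset.card_le_card hsub
  have h2 : (A.erase a).card = A.card - 1 := Finset.card_erase_of_mem ha
  have h3 : 1 ≤ A.card := Finset.card_pos.mpr ⟨a, ha⟩
  simp only [rankIn, Finset.mem_Icc]
  omega

def permsOf (A : Finset ℕ) : Finset (List ℕ) := ((A.sort (· ≤ ·)).permutations).toFinset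

lemma mem_permsOf {A : Finset ℕ} {w : List ℕ} :
    w ∈ permsOf A ↔ w.Nodup ∧ w.toFinset = A := by
  rw [permsOf, List.mem_toFinset, List.mem_permutations]
  constructor
  · intro h
    refine ⟨h.symm.nodup (Finset.sort_nodup _ _), ?_⟩
    rw [← Finset.sort_toFinset A (· ≤ ·)]
    exact Finset.ext fun x => by simp [List.mem_toFinset, h.mem_iff]
  · rintro ⟨h1, h2⟩
    exact List.perm_of_nodup_nodup_toFinset_eq h1 (Finset.sort_nodup _ _)
      (h2.trans (Finset.sort_toFinset _ _).symm)

lemma card_permsOf (A : Finset ℕ) : (permsOf A).card = A.card.factorial := by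
  rw [permsOf, List.toFinset_card_of_nodup (List.nodup_permutations _ (Finset.sort_nodup _ _)),
    List.length_permutations, Finset.length_sort]

lemma length_of_mem_permsOf {A : Finset ℕ} {w : List ℕ} (h : w ∈ permsOf A) :
    w.length = A.card := by
  obtain ⟨h1, h2⟩ := mem_permsOf.mp h
  rw [← h2, List.toFinset_card_of_nodup h1]

lemma countP_eq_card_filter {A : Finset ℕ} {w : List ℕ} (hw : w ∈ permsOf A) (p : ℕ → Bool) :
    w.countP p = (A.filter (fun x => p x = true)).card := by
  obtain ⟨h1, h2⟩ := mem_permsOf.mp hw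
  rw [List.countP_eq_length_filter, ← List.toFinset_card_of_nodup (h1.filter p),
    List.toFinset_filter, h2]

lemma redList_eq_map {A : Finset ℕ} {w : List ℕ} (h : w ∈ permsOf A) :
    redList w = w.map (rankIn A) := by
  apply List.map_congr_left
  intro a _
  rw [← List.countP_eq_length_filter, countP_eq_card_filter h]
  simp [rankIn]

lemma map_rank_mem {A : Finset ℕ} {w : List ℕ} (h : w ∈ permsOf A) :
    w.map (rankIn A) ∈ permsOf (Finset.Icc 1 A.card) := by
  obtain ⟨h1, h2⟩ := mem_permsOf.mp h
  have hmem : ∀ a ∈ w, a ∈ A := fun a ha => h2 ▸ List.mem_toFinset.mpr ha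
  rw [mem_permsOf]
  have hnd : (w.map (rankIn A)).Nodup :=
    h1.map_on (fun x hx y hy hxy => rankIn_injOn (hmem x hx) (hmem y hy) hxy)
  refine ⟨hnd, ?_⟩
  apply Finset.eq_of_subset_of_card_le
  · intro x hx
    rw [List.mem_toFinset, List.mem_map] at hx
    obtain ⟨a, ha, rfl⟩ := hx
    exact rankIn_mem (hmem a ha)
  · rw [List.toFinset_card_of_nodup hnd, List.length_map, length_of_mem_permsOf h,
      Nat.card_Icc]
    omega

lemma map_injOn_list {f : ℕ → ℕ} {A : Finset ℕ} (hf : ∀ x ∈ A, ∀ y ∈ A, f x = f y → x = y) :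
    ∀ (l l' : List ℕ), (∀ x ∈ l, x ∈ A) → (∀ x ∈ l', x ∈ A) → l.map f = l'.map f → l = l' := by
  intro l
  induction l with
  | nil => intro l' _ _ h; cases l' <;> simp_all
  | cons a l ih =>
      intro l' hl hl' h
      cases l' with
      | nil => simp at h
      | cons b l'' =>
          simp only [List.map_cons, List.cons.injEq] at h
          have hab : a = b := hf a (hl a (by simp)) b (hl' b (by simp)) h.1
          rw [hab, ih l'' (fun x hx => hl x (List.mem_cons_of_mem _ hx))
            (fun x hx => hl' x (List.mem_cons_of_mem _ hx)) h.2]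

lemma image_map_rank (A : Finset ℕ) :
    (permsOf A).image (List.map (rankIn A)) = permsOf (Finset.Icc 1 A.card) := by
  apply Finset.eq_of_subset_of_card_le
  · intro x hx
    rw [Finset.mem_image] at hx
    obtain ⟨w, hw, rfl⟩ := hx
    exact map_rank_mem hw
  · rw [Finset.card_image_of_injOn, card_permsOf, card_permsOf, Nat.card_Icc,
      Nat.add_sub_cancel]
    · intro w hw w' hw' hww
      have h2 := (mem_permsOf.mp hw).2
      have h2' := (mem_permsOf.mp hw').2
      exact map_injOn_list (fun x hx y hy => rankIn_injOn hx hy) w w'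
        (fun x hx => h2 ▸ List.mem_toFinset.mpr hx)
        (fun x hx => h2' ▸ List.mem_toFinset.mpr hx) hww

section Weights

variable {K : Type*} [Field K] (q : K) (ω : List ℕ → K)
  (hred : ∀ l : List ℕ, l.Nodup → ω l = ω (redList l))

lemma noninv_map_rank {A : Finset ℕ} {w : List ℕ} (h : w ∈ permsOf A) :
    noninvCount (w.map (rankIn A)) = noninvCount w := by
  obtain ⟨h1, h2⟩ := mem_permsOf.mp h
  exact noninvCount_map _ w fun a ha b hb =>
    rankIn_iff (h2 ▸ List.mem_toFinset.mpr ha) (h2 ▸ List.mem_toFinset.mpr hb)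

include hred in
lemma sum_weight_permsOf (A : Finset ℕ) :
    ∑ w ∈ permsOf A, ω w * q ^ noninvCount w
      = ∑ z ∈ permsOf (Finset.Icc 1 A.card), ω z * q ^ noninvCount z := by
  rw [← image_map_rank A, Finset.sum_image]
  · apply Finset.sum_congr rfl
    intro w hw
    rw [noninv_map_rank hw, ← redList_eq_map hw, ← hred w (mem_permsOf.mp hw).1]
  · intro w hw w' hw' hww
    exact map_injOn_list (fun x hx y hy => rankIn_injOn hx hy) w w'
      (fun x hx => (mem_permsOf.mp hw).2 ▸ List.mem_toFinset.mpr hx)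
      (fun x hx => (mem_permsOf.mp hw').2 ▸ List.mem_toFinset.mpr hx) hww

include hred in
lemma sum_weight_cons (B : Finset ℕ) (M : ℕ) (hM : ∀ b ∈ B, b < M) :
    ∑ v ∈ permsOf B, ω (M :: v) * q ^ noninvCount (M :: v)
      = ∑ v' ∈ permsOf (Finset.Icc 1 B.card),
          ω ((B.card + 1) :: v') * q ^ noninvCount ((B.card + 1) :: v') := by
  have hMB : M ∉ B := fun h => absurd (hM M h) (lt_irrefl M)
  have key : ∀ v ∈ permsOf B,
      ω (M :: v) * q ^ noninvCount (M :: v)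
        = ω ((B.card + 1) :: v.map (rankIn B)) *
            q ^ noninvCount ((B.card + 1) :: v.map (rankIn B)) := by
    intro v hv
    obtain ⟨hv1, hv2⟩ := mem_permsOf.mp hv
    have hvmem : ∀ b ∈ v, b ∈ B := fun b hb => hv2 ▸ List.mem_toFinset.mpr hb
    have hMv : M ∉ v := fun h => hMB (hvmem M h)
    have hcons : (M :: v) ∈ permsOf (insert M B) := by
      rw [mem_permsOf]
      refine ⟨List.nodup_cons.mpr ⟨hMv, hv1⟩, ?_⟩
      rw [List.toFinset_cons, hv2]
    -- rank of M in insert M B is B.card + 1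
    have hrM : rankIn (insert M B) M = B.card + 1 := by
      unfold rankIn
      congr 1
      have : (insert M B).filter (fun b => b < M) = B := by
        ext x
        simp only [Finset.mem_filter, Finset.mem_insert]
        constructor
        · rintro ⟨h1 | h1, h2⟩
          · omega
          · exact h1
        · intro h; exact ⟨Or.inr h, hM x h⟩
      rw [this]
    have hrB : ∀ b ∈ v, rankIn (insert M B) b = rankIn B b := by
      intro b hb
      unfold rankIn
      congr 2
      ext x
      simp only [Finset.mem_filter, Finset.mem_insert]
      have hbM := hM b (hvmem b hb)
      constructor
      · rintro ⟨h1 | h1, h2⟩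
        · omega
        · exact ⟨h1, h2⟩
      · rintro ⟨h1, h2⟩; exact ⟨Or.inr h1, h2⟩
    have hmap : (M :: v).map (rankIn (insert M B)) = (B.card + 1) :: v.map (rankIn B) := by
      simp only [List.map_cons, hrM, List.cons.injEq, true_and]
      exact List.map_congr_left hrB
    rw [hred _ (List.nodup_cons.mpr ⟨hMv, hv1⟩), redList_eq_map hcons, hmap,
      ← hmap, noninv_map_rank hcons, hmap]
  have hinj : ∀ w ∈ permsOf B, ∀ w' ∈ permsOf B,
      List.map (rankIn B) w = List.map (rankIn B) w' → w = w' := by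
    intro w hw w' hw' hww
    exact map_injOn_list (fun x hx y hy => rankIn_injOn hx hy) w w'
      (fun x hx => (mem_permsOf.mp hw).2 ▸ List.mem_toFinset.mpr hx)
      (fun x hx => (mem_permsOf.mp hw').2 ▸ List.mem_toFinset.mpr hx) hww
  refine (Finset.sum_congr rfl key).trans ?_
  have himg := image_map_rank B
  calc ∑ x ∈ permsOf B, ω ((B.card + 1) :: List.map (rankIn B) x) *
          q ^ noninvCount ((B.card + 1) :: List.map (rankIn B) x)
      = ∑ v' ∈ (permsOf B).image (List.map (rankIn B)),
          ω ((B.card + 1) :: v') * q ^ noninvCount ((B.card + 1) :: v') :=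
        (Finset.sum_image (f := fun v' =>
          ω ((B.card + 1) :: v') * q ^ noninvCount ((B.card + 1) :: v')) hinj).symm
    _ = _ := by rw [himg]

end Weights


section WordOf

variable {K : Type*} [Field K]

lemma wordOf_injective {n : ℕ} : Function.Injective (wordOf (n := n)) := by
  intro π π' h
  unfold wordOf at h
  rw [List.ofFn_inj] at h
  ext i
  have := congrFun h i
  omega

lemma wordOf_mem {n : ℕ} (π : Equiv.Perm (Fin n)) : wordOf π ∈ permsOf (Finset.Icc 1 n) := by
  rw [mem_permsOf]
  have hnd : (wordOf π).Nodup := by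
    rw [wordOf, List.nodup_ofFn]
    intro i j h
    simp only at h
    exact π.injective (Fin.val_injective (by omega))
  refine ⟨hnd, ?_⟩
  apply Finset.eq_of_subset_of_card_le
  · intro x hx
    rw [List.mem_toFinset, wordOf, List.mem_ofFn] at hx
    obtain ⟨i, rfl⟩ := hx
    simp only [Finset.mem_Icc]
    have := (π i).isLt
    omega
  · rw [List.toFinset_card_of_nodup hnd, wordOf, List.length_ofFn, Nat.card_Icc]
    omega

lemma image_wordOf (n : ℕ) :
    (Finset.univ : Finset (Equiv.Perm (Fin n))).image wordOf = permsOf (Finset.Icc 1 n) := by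
  apply Finset.eq_of_subset_of_card_le
  · intro x hx
    rw [Finset.mem_image] at hx
    obtain ⟨π, _, rfl⟩ := hx
    exact wordOf_mem π
  · rw [Finset.card_image_of_injective _ wordOf_injective, card_permsOf, Nat.card_Icc,
      Nat.add_sub_cancel, Finset.card_univ, Fintype.card_perm, Fintype.card_fin]

lemma sum_perm_eq (n : ℕ) (g : List ℕ → K) :
    ∑ π : Equiv.Perm (Fin n), g (wordOf π) = ∑ w ∈ permsOf (Finset.Icc 1 n), g w := by
  rw [← image_wordOf n, Finset.sum_image (fun x _ y _ h => wordOf_injective h)]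

lemma sum_perm_filter_eq (n : ℕ) (g : List ℕ → K) (p : List ℕ → Prop) [DecidablePred p] :
    ∑ π ∈ Finset.univ.filter (fun π : Equiv.Perm (Fin n) => p (wordOf π)), g (wordOf π)
      = ∑ w ∈ (permsOf (Finset.Icc 1 n)).filter p, g w := by
  rw [← image_wordOf n, Finset.filter_image,
    Finset.sum_image (fun x _ y _ h => wordOf_injective h)]

lemma Icc_erase (m : ℕ) : (Finset.Icc 1 m).erase m = Finset.Icc 1 (m - 1) := by
  ext x
  simp only [Finset.mem_erase, Finset.mem_Icc]
  omega

lemma Icc_insert (m : ℕ) (hm : 1 ≤ m) : insert m (Finset.Icc 1 (m - 1)) = Finset.Icc 1 m := by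
  ext x
  simp only [Finset.mem_insert, Finset.mem_Icc]
  omega

lemma perms_head_filter (m : ℕ) (hm : 1 ≤ m) :
    (permsOf (Finset.Icc 1 m)).filter (fun w => w.head? = some m)
      = (permsOf (Finset.Icc 1 (m - 1))).image (fun v => m :: v) := by
  ext w
  simp only [Finset.mem_filter, Finset.mem_image]
  constructor
  · rintro ⟨hw, hhead⟩
    obtain ⟨hnd, htf⟩ := mem_permsOf.mp hw
    cases w with
    | nil => simp at hhead
    | cons a v =>
        simp only [List.head?_cons, Option.some.injEq] at hhead
        subst hhead
        refine ⟨v, ?_, rfl⟩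
        rw [mem_permsOf]
        rw [List.nodup_cons] at hnd
        refine ⟨hnd.2, ?_⟩
        rw [List.toFinset_cons] at htf
        rw [← Icc_erase, ← htf, Finset.erase_insert (by simpa using hnd.1)]
  · rintro ⟨v, hv, rfl⟩
    obtain ⟨hnd, htf⟩ := mem_permsOf.mp hv
    have hmv : m ∉ v := by
      intro h
      have := htf ▸ List.mem_toFinset.mpr h
      simp only [Finset.mem_Icc] at this
      omega
    refine ⟨mem_permsOf.mpr ⟨List.nodup_cons.mpr ⟨hmv, hnd⟩, ?_⟩, by simp⟩
    rw [List.toFinset_cons, htf, Icc_insert m hm]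

lemma sum_basic_eq (m : ℕ) (hm : 1 ≤ m) (g : List ℕ → K) :
    ∑ π ∈ Finset.univ.filter (fun π : Equiv.Perm (Fin m) => (wordOf π).head? = some m),
        g (wordOf π)
      = ∑ v ∈ permsOf (Finset.Icc 1 (m - 1)), g (m :: v) := by
  rw [sum_perm_filter_eq m g (fun w => w.head? = some m), perms_head_filter m hm,
    Finset.sum_image (fun x _ y _ h => by simpa using h)]

end WordOf

section Split

variable {K : Type*} [Field K]

lemma decomp_of_mem {n : ℕ} {w : List ℕ} (hw : w ∈ permsOf (Finset.Icc 1 (n + 1))) :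
    w = w.takeWhile (fun a => decide (a ≠ n + 1))
      ++ (n + 1) :: (w.dropWhile (fun a => decide (a ≠ n + 1))).tail := by
  obtain ⟨hnd, htf⟩ := mem_permsOf.mp hw
  have hM : (n + 1) ∈ w := by
    apply List.mem_toFinset.mp
    rw [htf]
    simp only [Finset.mem_Icc]
    omega
  have hdne : w.dropWhile (fun a => decide (a ≠ n + 1)) ≠ [] := by
    intro h
    have := List.dropWhile_eq_nil_iff.mp h _ hM
    simp at this
  have hhead : (w.dropWhile (fun a => decide (a ≠ n + 1))).head hdne = n + 1 := by
    have := List.head_dropWhile_not (fun a => decide (a ≠ n + 1)) hdne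
    simpa using this
  conv_lhs => rw [← List.takeWhile_append_dropWhile (p := fun a => decide (a ≠ n + 1)) (l := w),
    ← List.cons_head_tail (l := w.dropWhile (fun a => decide (a ≠ n + 1))) hdne, hhead]

lemma split_sum (n : ℕ) (g : List ℕ → K) :
    ∑ w ∈ permsOf (Finset.Icc 1 (n + 1)), g w
      = ∑ S ∈ (Finset.Icc 1 n).powerset, ∑ u ∈ permsOf S,
          ∑ v ∈ permsOf (Finset.Icc 1 n \ S), g (u ++ (n + 1) :: v) := by
  have hps : ∀ S ∈ (Finset.Icc 1 n).powerset, ∀ u ∈ permsOf S,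
      ∀ v ∈ permsOf (Finset.Icc 1 n \ S), (u ++ (n + 1) :: v) ∈ permsOf (Finset.Icc 1 (n + 1))
        ∧ (u ++ (n + 1) :: v).takeWhile (fun a => decide (a ≠ n + 1)) = u
        ∧ (u ++ (n + 1) :: v).dropWhile (fun a => decide (a ≠ n + 1)) = (n + 1) :: v := by
    intro S hS u hu v hv
    rw [Finset.mem_powerset] at hS
    obtain ⟨hund, hutf⟩ := mem_permsOf.mp hu
    obtain ⟨hvnd, hvtf⟩ := mem_permsOf.mp hv
    have humem : ∀ a ∈ u, a ∈ Finset.Icc 1 n := fun a ha => hS (hutf ▸ List.mem_toFinset.mpr ha)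
    have hvmem : ∀ a ∈ v, a ∈ Finset.Icc 1 n \ S := fun a ha => hvtf ▸ List.mem_toFinset.mpr ha
    have hMfalse : (fun a => decide (a ≠ n + 1)) (n + 1) = false := by simp
    have htw := takeWhile_append_mid (fun a => decide (a ≠ n + 1)) u v (n + 1) hMfalse
    have huall : ∀ a ∈ u, (fun a => decide (a ≠ n + 1)) a = true := by
      intro a ha
      have := humem a ha
      simp only [Finset.mem_Icc] at this
      simp only [decide_eq_true_eq]
      omega
    have htu : u.takeWhile (fun a => decide (a ≠ n + 1)) = u :=
      List.takeWhile_eq_self_iff.mpr huall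
    have hdu : u.dropWhile (fun a => decide (a ≠ n + 1)) = [] :=
      List.dropWhile_eq_nil_iff.mpr huall
    refine ⟨?_, by rw [htw.1, htu], by rw [htw.2, hdu]; rfl⟩
    rw [mem_permsOf]
    constructor
    · rw [List.nodup_append]
      refine ⟨hund, List.nodup_cons.mpr ⟨fun h => ?_, hvnd⟩, ?_⟩
      · have := hvmem _ h
        simp only [Finset.mem_sdiff, Finset.mem_Icc] at this
        omega
      · intro a hau b hav hab
        subst hab
        rcases List.mem_cons.mp hav with h | hav
        · have := humem a hau
          simp only [Finset.mem_Icc] at this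
          omega
        · have h1 := humem a hau
          have h2 := hvmem a hav
          simp only [Finset.mem_sdiff] at h2
          exact h2.2 (hutf ▸ List.mem_toFinset.mpr hau)
    · ext x
      simp only [List.toFinset_append, List.toFinset_cons, Finset.mem_union, Finset.mem_insert,
        List.mem_toFinset, Finset.mem_Icc]
      constructor
      · rintro (hx | rfl | hx)
        · have := humem x hx
          simp only [Finset.mem_Icc] at this
          omega
        · omega
        · have := hvmem x hx
          simp only [Finset.mem_sdiff, Finset.mem_Icc] at this
          omega
      · intro hx
        rcases Nat.lt_or_ge x (n + 1) with h | h
        · by_cases hxS : x ∈ S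
          · exact Or.inl (List.mem_toFinset.mp (hutf ▸ hxS))
          · right; right
            apply List.mem_toFinset.mp
            rw [hvtf]
            simp only [Finset.mem_sdiff, Finset.mem_Icc]
            exact ⟨⟨hx.1, by omega⟩, hxS⟩
        · exact Or.inr (Or.inl (by omega))
  have h1 : ∑ w ∈ permsOf (Finset.Icc 1 (n + 1)), g w
      = ∑ x ∈ ((Finset.Icc 1 n).powerset).sigma
          (fun S => permsOf S ×ˢ permsOf (Finset.Icc 1 n \ S)),
          g (x.2.1 ++ (n + 1) :: x.2.2) := by
    refine Finset.sum_nbij' (i := fun w =>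
      (⟨(w.takeWhile (fun a => decide (a ≠ n + 1))).toFinset,
        (w.takeWhile (fun a => decide (a ≠ n + 1)),
         (w.dropWhile (fun a => decide (a ≠ n + 1))).tail)⟩ :
        (_ : Finset ℕ) × (List ℕ × List ℕ)))
      (j := fun x => x.2.1 ++ (n + 1) :: x.2.2) ?_ ?_ ?_ ?_ ?_
    · intro w hw
      obtain ⟨hnd, htf⟩ := mem_permsOf.mp hw
      have hdec := decomp_of_mem hw
      set u := w.takeWhile (fun a => decide (a ≠ n + 1)) with hu
      set v := (w.dropWhile (fun a => decide (a ≠ n + 1))).tail with hv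
      have hndw : (u ++ (n + 1) :: v).Nodup := hdec ▸ hnd
      rw [List.nodup_append, List.nodup_cons] at hndw
      obtain ⟨hund, ⟨hMv, hvnd⟩, hdisj⟩ := hndw
      have humem : ∀ a ∈ u, a ∈ Finset.Icc 1 n := by
        intro a ha
        have h1 : a ∈ w := (List.takeWhile_sublist _).mem ha
        have h2 := List.mem_takeWhile_imp ha
        have h3 := List.mem_toFinset.mpr h1
        rw [htf] at h3
        simp only [Finset.mem_Icc] at h3 ⊢
        simp only [decide_eq_true_eq] at h2
        omega
      rw [Finset.mem_sigma, Finset.mem_product]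
      refine ⟨Finset.mem_powerset.mpr (fun x hx => humem x (List.mem_toFinset.mp hx)),
        mem_permsOf.mpr ⟨hund, rfl⟩, mem_permsOf.mpr ⟨hvnd, ?_⟩⟩
      ext x
      simp only [List.mem_toFinset, Finset.mem_sdiff, Finset.mem_Icc]
      constructor
      · intro hx
        have hxw : x ∈ w := by
          rw [hdec, List.mem_append, List.mem_cons]
          exact Or.inr (Or.inr hx)
        have h3 := List.mem_toFinset.mpr hxw
        rw [htf] at h3
        simp only [Finset.mem_Icc] at h3
        have hxM : x ≠ n + 1 := fun h => hMv (h ▸ hx)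
        refine ⟨⟨h3.1, by omega⟩, fun hxu => hdisj _ hxu _ (List.mem_cons_of_mem _ hx) rfl⟩
      · rintro ⟨⟨hx1, hx2⟩, hxu⟩
        have hxw : x ∈ w := by
          apply List.mem_toFinset.mp
          rw [htf]
          simp only [Finset.mem_Icc]
          omega
        rw [hdec, List.mem_append, List.mem_cons] at hxw
        rcases hxw with h | h | h
        · exact absurd h hxu
        · omega
        · exact h
    · rintro ⟨S, u, v⟩ hx
      rw [Finset.mem_sigma, Finset.mem_product] at hx
      exact (hps S hx.1 u hx.2.1 v hx.2.2).1
    · intro w hw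
      exact (decomp_of_mem hw).symm
    · rintro ⟨S, u, v⟩ hx
      rw [Finset.mem_sigma, Finset.mem_product] at hx
      obtain ⟨_, h2, h3⟩ := hps S hx.1 u hx.2.1 v hx.2.2
      have htf : u.toFinset = S := (mem_permsOf.mp hx.2.1).2
      simp only [h2, h3, List.tail_cons, htf]
    · intro w hw
      exact congrArg g (decomp_of_mem hw)
  rw [h1, Finset.sum_sigma]
  exact Finset.sum_congr rfl fun S hS => Finset.sum_product _ _ _

end Split

section Rec

variable {K : Type*} [Field K] (q : K) (ω : List ℕ → K)

def nuVal (n : ℕ) (S : Finset ℕ) : ℕ :=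
  ∑ a ∈ S, ((Finset.Icc 1 n \ S).filter (fun b => a < b)).card

noncomputable def gammaVal (k : ℕ) : K :=
  ∑ z ∈ permsOf (Finset.Icc 1 k), ω z * q ^ noninvCount z

noncomputable def fVal (m : ℕ) : K :=
  ∑ v ∈ permsOf (Finset.Icc 1 (m - 1)), ω (m :: v) * q ^ noninvCount (m :: v)

lemma sum_map_one_add (c : ℕ → ℕ) (u : List ℕ) :
    (u.map (fun a => 1 + c a)).sum = u.length + (u.map c).sum := by
  induction u with
  | nil => simp
  | cons a u ih =>
      simp only [List.map_cons, List.sum_cons, List.length_cons, ih]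
      omega

lemma weight_split (hmult : ∀ l : List ℕ, l.Nodup → ω l = ((basicBlocks l).map ω).prod)
    {n : ℕ} {S : Finset ℕ} (hS : S ⊆ Finset.Icc 1 n) {u v : List ℕ}
    (hu : u ∈ permsOf S) (hv : v ∈ permsOf (Finset.Icc 1 n \ S)) :
    ω (u ++ (n + 1) :: v) * q ^ noninvCount (u ++ (n + 1) :: v)
      = q ^ (S.card + nuVal n S) * (ω u * q ^ noninvCount u) *
          (ω ((n + 1) :: v) * q ^ noninvCount ((n + 1) :: v)) := by
  obtain ⟨hund, hutf⟩ := mem_permsOf.mp hu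
  obtain ⟨hvnd, hvtf⟩ := mem_permsOf.mp hv
  have humem : ∀ a ∈ u, a ∈ Finset.Icc 1 n := fun a ha => hS (hutf ▸ List.mem_toFinset.mpr ha)
  have hvmem : ∀ a ∈ v, a ∈ Finset.Icc 1 n \ S := fun a ha => hvtf ▸ List.mem_toFinset.mpr ha
  have hult : ∀ a ∈ u, a < n + 1 := by
    intro a ha
    have := humem a ha
    simp only [Finset.mem_Icc] at this
    omega
  have hvlt : ∀ a ∈ v, a < n + 1 := by
    intro a ha
    have := hvmem a ha
    simp only [Finset.mem_sdiff, Finset.mem_Icc] at this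
    omega
  have hnd : (u ++ (n + 1) :: v).Nodup := by
    rw [List.nodup_append, List.nodup_cons]
    refine ⟨hund, ⟨fun h => by have := hvlt _ h; omega, hvnd⟩, ?_⟩
    intro a hau b hav hab
    subst hab
    rcases List.mem_cons.mp hav with h | hav
    · have := hult a hau; omega
    · have h2 := hvmem a hav
      simp only [Finset.mem_sdiff] at h2
      exact h2.2 (hutf ▸ List.mem_toFinset.mpr hau)
  -- ω splits
  have homega : ω (u ++ (n + 1) :: v) = ω u * ω ((n + 1) :: v) := by
    rw [hmult _ hnd, basicBlocks_append (n + 1) u v hult hvlt, List.map_append,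
      List.prod_append, ← hmult u hund]
    simp
  -- noninv splits
  have hcount : ∀ a ∈ u, ((n + 1) :: v).countP (fun b => decide (a < b))
      = 1 + ((Finset.Icc 1 n \ S).filter (fun b => a < b)).card := by
    intro a ha
    rw [List.countP_cons]
    have h1 : decide (a < n + 1) = true := by simp [hult a ha]
    rw [countP_eq_card_filter hv]
    have h2 : (Finset.Icc 1 n \ S).filter (fun x => decide (a < x) = true)
        = (Finset.Icc 1 n \ S).filter (fun b => a < b) := by
      apply Finset.filter_congr
      intro x _
      simp
    rw [h2, h1]
    simp [Nat.add_comm]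
  have hsum : (u.map (fun a => ((n + 1) :: v).countP (fun b => decide (a < b)))).sum
      = S.card + nuVal n S := by
    rw [List.map_congr_left hcount, sum_map_one_add, length_of_mem_permsOf hu]
    congr 1
    rw [nuVal, ← hutf, List.sum_toFinset _ hund]
  rw [noninv_append, homega, hsum]
  ring

lemma gamma_rec (hred : ∀ l : List ℕ, l.Nodup → ω l = ω (redList l))
    (hmult : ∀ l : List ℕ, l.Nodup → ω l = ((basicBlocks l).map ω).prod) (n : ℕ) :
    gammaVal q ω (n + 1) = ∑ S ∈ (Finset.Icc 1 n).powerset,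
      q ^ (S.card + nuVal n S) * gammaVal q ω S.card * fVal q ω (n - S.card + 1) := by
  rw [gammaVal, split_sum n (fun w => ω w * q ^ noninvCount w)]
  apply Finset.sum_congr rfl
  intro S hS
  rw [Finset.mem_powerset] at hS
  have hBcard : (Finset.Icc 1 n \ S).card = n - S.card := by
    rw [Finset.card_sdiff_of_subset hS, Nat.card_Icc]
    omega
  calc ∑ u ∈ permsOf S, ∑ v ∈ permsOf (Finset.Icc 1 n \ S),
        ω (u ++ (n + 1) :: v) * q ^ noninvCount (u ++ (n + 1) :: v)
      = ∑ u ∈ permsOf S, ∑ v ∈ permsOf (Finset.Icc 1 n \ S),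
          q ^ (S.card + nuVal n S) * (ω u * q ^ noninvCount u) *
            (ω ((n + 1) :: v) * q ^ noninvCount ((n + 1) :: v)) := by
        apply Finset.sum_congr rfl
        intro u hu
        apply Finset.sum_congr rfl
        intro v hv
        exact weight_split q ω hmult hS hu hv
    _ = q ^ (S.card + nuVal n S) * (∑ u ∈ permsOf S, ω u * q ^ noninvCount u) *
          (∑ v ∈ permsOf (Finset.Icc 1 n \ S),
            ω ((n + 1) :: v) * q ^ noninvCount ((n + 1) :: v)) := by
        simp only [Finset.mul_sum, Finset.sum_mul]
        rw [Finset.sum_comm]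
    _ = q ^ (S.card + nuVal n S) * gammaVal q ω S.card * fVal q ω (n - S.card + 1) := by
        congr 1
        · congr 1
          rw [sum_weight_permsOf q ω hred S, gammaVal]
        · have hlt : ∀ b ∈ Finset.Icc 1 n \ S, b < n + 1 := by
            intro b hb
            simp only [Finset.mem_sdiff, Finset.mem_Icc] at hb
            omega
          rw [sum_weight_cons q ω hred _ _ hlt, fVal, hBcard]
          simp

end Rec



section QBinom

variable {K : Type*} [Field K] (q : K)

lemma qInt_add (a b : ℕ) : qInt q (a + b) = qInt q a + q ^ a * qInt q b := by
  induction b with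
  | zero => simp [qInt]
  | succ b ih =>
      have h1 : qInt q (b + 1) = qInt q b + q ^ b := Finset.sum_range_succ _ b
      have h2 : qInt q (a + b + 1) = qInt q (a + b) + q ^ (a + b) := Finset.sum_range_succ _ _
      have h3 : a + (b + 1) = (a + b) + 1 := by omega
      rw [h3, h2, ih, h1]
      ring

lemma qFact_succ (n : ℕ) : qFact q (n + 1) = qFact q n * qInt q (n + 1) :=
  Finset.prod_range_succ _ n

@[simp] lemma qFact_zero : qFact q 0 = 1 := rfl

noncomputable def cVal (n i : ℕ) : K :=
  ∑ S ∈ Finset.powersetCard i (Finset.Icc 1 n), q ^ nuVal n S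

lemma nuVal_empty (n : ℕ) : nuVal n ∅ = 0 := rfl

lemma cVal_zero (n : ℕ) : cVal q n 0 = 1 := by
  rw [cVal, Finset.powersetCard_zero, Finset.sum_singleton, nuVal_empty, pow_zero]

lemma cVal_gt {n i : ℕ} (h : n < i) : cVal q n i = 0 := by
  rw [cVal, Finset.powersetCard_eq_empty.mpr (by rw [Nat.card_Icc]; omega), Finset.sum_empty]

lemma nu_step1 {n : ℕ} {S : Finset ℕ} (hS : S ⊆ Finset.Icc 1 n) :
    nuVal (n + 1) S = nuVal n S + S.card := by
  rw [nuVal, nuVal, Finset.card_eq_sum_ones, ← Finset.sum_add_distrib]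
  apply Finset.sum_congr rfl
  intro a ha
  have haIcc := hS ha
  simp only [Finset.mem_Icc] at haIcc
  have hins : Finset.Icc 1 (n + 1) \ S = insert (n + 1) (Finset.Icc 1 n \ S) := by
    ext x
    simp only [Finset.mem_sdiff, Finset.mem_insert, Finset.mem_Icc]
    constructor
    · rintro ⟨⟨h1, h2⟩, h3⟩
      rcases Nat.lt_or_ge x (n + 1) with h | h
      · exact Or.inr ⟨⟨h1, by omega⟩, h3⟩
      · left; omega
    · rintro (rfl | ⟨⟨h1, h2⟩, h3⟩)
      · refine ⟨⟨by omega, le_refl _⟩, fun h => ?_⟩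
        have := hS h
        simp only [Finset.mem_Icc] at this
        omega
      · exact ⟨⟨h1, by omega⟩, h3⟩
  rw [hins, Finset.filter_insert, if_pos (by omega), Finset.card_insert_of_notMem]
  intro h
  have := Finset.mem_sdiff.mp (Finset.mem_filter.mp h).1
  simp only [Finset.mem_Icc] at this
  omega

lemma nu_step2 {n : ℕ} {S : Finset ℕ} (hS : S ⊆ Finset.Icc 1 n) :
    nuVal (n + 1) (insert (n + 1) S) = nuVal n S := by
  have hnS : (n + 1) ∉ S := fun h => by
    have := hS h
    simp only [Finset.mem_Icc] at this
    omega
  rw [nuVal, Finset.sum_insert hnS]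
  have h0 : ((Finset.Icc 1 (n + 1) \ insert (n + 1) S).filter (fun b => n + 1 < b)).card = 0 := by
    rw [Finset.card_eq_zero, Finset.filter_eq_empty_iff]
    intro x hx
    have := (Finset.mem_sdiff.mp hx).1
    simp only [Finset.mem_Icc] at this
    omega
  have hrest : Finset.Icc 1 (n + 1) \ insert (n + 1) S = Finset.Icc 1 n \ S := by
    ext x
    simp only [Finset.mem_sdiff, Finset.mem_insert, Finset.mem_Icc, not_or]
    constructor
    · rintro ⟨⟨h1, h2⟩, h3, h4⟩
      exact ⟨⟨h1, by omega⟩, h4⟩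
    · rintro ⟨⟨h1, h2⟩, h3⟩
      exact ⟨⟨h1, by omega⟩, by omega, h3⟩
  rw [h0, hrest, nuVal]
  omega

lemma cVal_pascal (n j : ℕ) :
    cVal q (n + 1) (j + 1) = q ^ (j + 1) * cVal q n (j + 1) + cVal q n j := by
  have hnotmem : (n + 1) ∉ Finset.Icc 1 n := by simp
  have hIcc : Finset.Icc 1 (n + 1) = insert (n + 1) (Finset.Icc 1 n) := by
    rw [← Icc_insert (n + 1) (by omega)]
    norm_num
  rw [cVal, hIcc, Finset.powersetCard_succ_insert hnotmem, Finset.sum_union]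
  · congr 1
    · rw [cVal, Finset.mul_sum]
      apply Finset.sum_congr rfl
      intro S hS
      rw [Finset.mem_powersetCard] at hS
      rw [nu_step1 hS.1, hS.2, pow_add, mul_comm]
    · rw [Finset.sum_image, cVal]
      · apply Finset.sum_congr rfl
        intro S hS
        rw [Finset.mem_powersetCard] at hS
        rw [nu_step2 hS.1]
      · intro S hS T hT h
        rw [Finset.mem_coe, Finset.mem_powersetCard] at hS hT
        have hnS : (n + 1) ∉ S := fun hc => hnotmem (hS.1 hc)
        have hnT : (n + 1) ∉ T := fun hc => hnotmem (hT.1 hc)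
        rw [← Finset.erase_insert hnS, ← Finset.erase_insert hnT, h]
  · rw [Finset.disjoint_left]
    intro S hS hS'
    rw [Finset.mem_powersetCard] at hS
    rw [Finset.mem_image] at hS'
    obtain ⟨T, hT, rfl⟩ := hS'
    exact hnotmem (hS.1 (Finset.mem_insert_self _ _))

lemma cVal_mul_fact : ∀ n i, i ≤ n → cVal q n i * (qFact q i * qFact q (n - i)) = qFact q n := by
  intro n
  induction n with
  | zero =>
      intro i hi
      interval_cases i
      simp [cVal_zero]
  | succ n ih =>
      intro i hi
      match i with
      | 0 => simp [cVal_zero]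
      | j + 1 =>
          rw [cVal_pascal]
          rcases Nat.lt_or_ge j n with hj | hj
          · -- j + 1 ≤ n
            obtain ⟨m, hm⟩ : ∃ m, n - j = m + 1 := ⟨n - j - 1, by omega⟩
            have hnm : n + 1 - (j + 1) = m + 1 := by omega
            have hnj : n - (j + 1) = m := by omega
            have IH1 := ih (j + 1) (by omega)
            have IH2 := ih j (by omega)
            rw [hnj] at IH1
            rw [hm] at IH2
            have hq' : qInt q (n + 1) = qInt q (j + 1) + q ^ (j + 1) * qInt q (m + 1) := by
              rw [← qInt_add]
              congr 1
              omega
            rw [hnm, qFact_succ q n, hq', qFact_succ q m, qFact_succ q j]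
            rw [qFact_succ q j] at IH1
            rw [qFact_succ q m] at IH2
            linear_combination (q ^ (j + 1) * qInt q (m + 1)) * IH1 + qInt q (j + 1) * IH2
          · -- j = n
            have hj' : j = n := by omega
            subst hj'
            rw [cVal_gt q (by omega), Nat.sub_self, qFact_zero, qFact_succ q j]
            have IH := ih j (le_refl j)
            rw [Nat.sub_self, qFact_zero] at IH
            linear_combination qInt q (j + 1) * IH

end QBinom

section Assemble

variable {K : Type*} [Field K] (q : K) (ω : List ℕ → K)

lemma qFact_ne_zero (hq : ∀ m : ℕ, 1 ≤ m → qInt q m ≠ 0) (n : ℕ) : qFact q n ≠ 0 := by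
  rw [qFact]
  exact Finset.prod_ne_zero_iff.mpr (fun i _ => hq (i + 1) (by omega))

lemma Icc_card (n : ℕ) : (Finset.Icc 1 n).card = n := by rw [Nat.card_Icc]; omega

lemma comb_rec (hred : ∀ l : List ℕ, l.Nodup → ω l = ω (redList l))
    (hmult : ∀ l : List ℕ, l.Nodup → ω l = ((basicBlocks l).map ω).prod)
    (hq : ∀ m : ℕ, 1 ≤ m → qInt q m ≠ 0) (n : ℕ) :
    gammaVal q ω (n + 1) / qFact q n
      = ∑ i ∈ Finset.range (n + 1),
          (gammaVal q ω i / qFact q i) * q ^ i * (fVal q ω (n - i + 1) / qFact q (n - i)) := by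
  rw [gamma_rec q ω hred hmult n, Finset.sum_powerset, Icc_card, Finset.sum_div]
  apply Finset.sum_congr rfl
  intro i hi
  rw [Finset.mem_range] at hi
  have hin : i ≤ n := by omega
  have hinner : ∑ S ∈ Finset.powersetCard i (Finset.Icc 1 n),
      q ^ (S.card + nuVal n S) * gammaVal q ω S.card * fVal q ω (n - S.card + 1)
      = cVal q n i * (q ^ i * gammaVal q ω i * fVal q ω (n - i + 1)) := by
    rw [cVal, Finset.sum_mul]
    apply Finset.sum_congr rfl
    intro S hS
    have hc := (Finset.mem_powersetCard.mp hS).2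
    rw [hc, pow_add]
    ring
  rw [hinner]
  have hci := cVal_mul_fact q n i hin
  have h1 := qFact_ne_zero q hq i
  have h2 := qFact_ne_zero q hq (n - i)
  have h3 := qFact_ne_zero q hq n
  field_simp
  linear_combination (q ^ i * gammaVal q ω i * fVal q ω (n - i + 1)) * hci

end Assemble


noncomputable def Rsum {K : Type*} [Field K] (q : K) (Fk : ℕ → PowerSeries K) (n : ℕ) : K :=
  ∑ k ∈ Finset.range (n + 1), q ^ Nat.choose k 2 / qFact q k * PowerSeries.coeff n (Fk k)

section Alg

variable {K : Type*} [Field K] (q : K) (F : PowerSeries K) (Fk : ℕ → PowerSeries K)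

lemma coeff_qDeriv (G : PowerSeries K) (m : ℕ) :
    PowerSeries.coeff m (qDeriv q G) = qInt q (m + 1) * PowerSeries.coeff (m + 1) G := by
  simp [qDeriv]

lemma hKR (hFkrec : ∀ k, 0 < k → qDeriv q (Fk k) =
      PowerSeries.C (qInt q k * (q ^ (k - 1))⁻¹) *
        PowerSeries.rescale q (Fk (k - 1)) * qDeriv q F) (k m : ℕ) :
    qInt q (m + 1) * PowerSeries.coeff (m + 1) (Fk (k + 1))
      = (qInt q (k + 1) * (q ^ k)⁻¹) *
          ∑ p ∈ Finset.HasAntidiagonal.antidiagonal m, q ^ p.1 * PowerSeries.coeff p.1 (Fk k) *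
            (qInt q (p.2 + 1) * PowerSeries.coeff (p.2 + 1) F) := by
  have h := hFkrec (k + 1) (Nat.succ_pos k)
  rw [Nat.add_sub_cancel] at h
  have h2 : PowerSeries.coeff m (qDeriv q (Fk (k + 1)))
      = qInt q (m + 1) * PowerSeries.coeff (m + 1) (Fk (k + 1)) := coeff_qDeriv q _ m
  rw [h, mul_assoc, PowerSeries.coeff_C_mul, PowerSeries.coeff_mul] at h2
  rw [← h2]
  congr 1
  apply Finset.sum_congr rfl
  intro p _
  rw [PowerSeries.coeff_rescale, coeff_qDeriv]

lemma coeff_Fk_zero (hq : ∀ m : ℕ, 1 ≤ m → qInt q m ≠ 0)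
    (hFkc : ∀ k, 0 < k → PowerSeries.constantCoeff (Fk k) = 0)
    (hFkrec : ∀ k, 0 < k → qDeriv q (Fk k) =
      PowerSeries.C (qInt q k * (q ^ (k - 1))⁻¹) *
        PowerSeries.rescale q (Fk (k - 1)) * qDeriv q F) :
    ∀ k i, i < k → PowerSeries.coeff i (Fk k) = 0 := by
  intro k
  induction k with
  | zero => intro i hi; omega
  | succ k ih =>
      intro i hi
      cases i with
      | zero =>
          rw [PowerSeries.coeff_zero_eq_constantCoeff]
          exact hFkc (k + 1) (by omega)
      | succ m =>
          have h := hKR q F Fk hFkrec k m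
          have hzero : ∑ p ∈ Finset.HasAntidiagonal.antidiagonal m, q ^ p.1 * PowerSeries.coeff p.1 (Fk k) *
              (qInt q (p.2 + 1) * PowerSeries.coeff (p.2 + 1) F) = 0 := by
            apply Finset.sum_eq_zero
            intro p hp
            have hp1 : p.1 ≤ m := by
              have := Finset.HasAntidiagonal.mem_antidiagonal.mp hp
              omega
            rw [ih p.1 (by omega), mul_zero, zero_mul]
          rw [hzero, mul_zero] at h
          exact (mul_eq_zero.mp h).resolve_left (hq (m + 1 + 1 - 1) (by omega))

lemma Rsum_zero_coeff (hFk0 : Fk 0 = 1) : Rsum q Fk 0 = PowerSeries.coeff 0 (Fk 0) := by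
  rw [Rsum]
  simp [qFact]

lemma Rsum_rec (hq0 : q ≠ 0) (hq : ∀ m : ℕ, 1 ≤ m → qInt q m ≠ 0) (f : ℕ → K)
    (hFdef : F = PowerSeries.mk fun n => f n / qFact q n)
    (hFk0 : Fk 0 = 1)
    (hFkc : ∀ k, 0 < k → PowerSeries.constantCoeff (Fk k) = 0)
    (hFkrec : ∀ k, 0 < k → qDeriv q (Fk k) =
      PowerSeries.C (qInt q k * (q ^ (k - 1))⁻¹) *
        PowerSeries.rescale q (Fk (k - 1)) * qDeriv q F) (n : ℕ) :
    qInt q (n + 1) * Rsum q Fk (n + 1)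
      = ∑ i ∈ Finset.range (n + 1), Rsum q Fk i * q ^ i * (f (n - i + 1) / qFact q (n - i)) := by
  have hcoeffF : ∀ m, PowerSeries.coeff m F = f m / qFact q m := by
    intro m
    rw [hFdef, PowerSeries.coeff_mk]
  have hpref : ∀ k : ℕ, q ^ Nat.choose (k + 1) 2 / qFact q (k + 1) * (qInt q (k + 1) * (q ^ k)⁻¹)
      = q ^ Nat.choose k 2 / qFact q k := by
    intro k
    have hch : Nat.choose (k + 1) 2 = Nat.choose k 2 + k := by
      have h := Nat.choose_succ_succ k 1
      rw [Nat.choose_one_right] at h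
      norm_num at h
      omega
    rw [hch, pow_add, qFact_succ]
    have h1 := qFact_ne_zero q hq k
    have h2 := hq (k + 1) (by omega)
    have h3 : q ^ k ≠ 0 := pow_ne_zero _ hq0
    field_simp
  have step1 : qInt q (n + 1) * Rsum q Fk (n + 1) = ∑ k ∈ Finset.range (n + 2),
      q ^ Nat.choose k 2 / qFact q k * (qInt q (n + 1) * PowerSeries.coeff (n + 1) (Fk k)) := by
    rw [Rsum, Finset.mul_sum]
    apply Finset.sum_congr rfl
    intro k _
    ring
  rw [step1, Finset.sum_range_succ']
  have hT0 : q ^ Nat.choose 0 2 / qFact q 0 * (qInt q (n + 1) * PowerSeries.coeff (n + 1) (Fk 0)) = 0 := by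
    rw [hFk0]
    simp [PowerSeries.coeff_one]
  rw [hT0, add_zero]
  have step2 : ∀ k ∈ Finset.range (n + 1), q ^ Nat.choose (k + 1) 2 / qFact q (k + 1) *
      (qInt q (n + 1) * PowerSeries.coeff (n + 1) (Fk (k + 1)))
      = ∑ p ∈ Finset.HasAntidiagonal.antidiagonal n, (q ^ Nat.choose k 2 / qFact q k * PowerSeries.coeff p.1 (Fk k)) *
          q ^ p.1 * (qInt q (p.2 + 1) * PowerSeries.coeff (p.2 + 1) F) := by
    intro k _
    rw [hKR q F Fk hFkrec k n, ← mul_assoc, hpref k, Finset.mul_sum]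
    apply Finset.sum_congr rfl
    intro p _
    ring
  rw [Finset.sum_congr rfl step2, Finset.sum_comm, Finset.Nat.sum_antidiagonal_eq_sum_range_succ_mk]
  apply Finset.sum_congr rfl
  intro i hi
  rw [Finset.mem_range] at hi
  rw [← Finset.sum_mul, ← Finset.sum_mul]
  have hsub : ∑ k ∈ Finset.range (n + 1), q ^ Nat.choose k 2 / qFact q k * PowerSeries.coeff i (Fk k)
      = Rsum q Fk i := by
    rw [Rsum]
    symm
    apply Finset.sum_subset (Finset.range_subset_range.mpr (by omega))
    intro k _ hk
    rw [Finset.mem_range, not_lt] at hk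
    rw [coeff_Fk_zero q F Fk hq hFkc hFkrec k i (by omega), mul_zero]
  rw [hsub]
  congr 1
  rw [hcoeffF (n - i + 1)]
  have h1 := hq (n - i + 1) (by omega)
  have h2 := qFact_ne_zero q hq (n - i)
  rw [show n - i + 1 = (n - i) + 1 from rfl, qFact_succ]
  field_simp

end Alg

/-- Theorem 6.7 (the variant of Gessel's q-exponential formula, for non-inversions):
for a multiplicative function `ω` on permutations, with
`γ̄ₙ = ∑_{π ∈ Sₙ} ω(π) q^{Ī(π)}`, `f̄ₙ = ∑_{β ∈ Bₙ} ω(β) q^{Ī(β)}` (`Bₙ` the basic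
permutations, i.e. those beginning with their greatest element `n`),
`F̄ = ∑_{n≥1} f̄ₙ tⁿ/[n]!`, and `Fk` the starred q-powers of `F̄`, one has
`∑ γ̄ₙ tⁿ/[n]! = E_q[F̄]*_q`, i.e. coefficientwise
`γ̄ₙ/[n]! = ∑_k (q^{C(k,2)}/[k]!) ⬝ coeff n F̄^{[k]*}`. -/
theorem stmt17 {K : Type*} [Field K] (q : K) (hq0 : q ≠ 0)
    (hq : ∀ m : ℕ, 1 ≤ m → qInt q m ≠ 0)
    (ω : List ℕ → K)
    (hred : ∀ l : List ℕ, l.Nodup → ω l = ω (redList l))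
    (hmult : ∀ l : List ℕ, l.Nodup → ω l = ((basicBlocks l).map ω).prod)
    (γ f : ℕ → K)
    (hγ : ∀ n, γ n = ∑ π : Equiv.Perm (Fin n),
      ω (wordOf π) * q ^ noninvCount (wordOf π))
    (hf : ∀ n, f n = ∑ π ∈ Finset.univ.filter
        (fun π : Equiv.Perm (Fin n) => (wordOf π).head? = some n),
      ω (wordOf π) * q ^ noninvCount (wordOf π))
    (F : PowerSeries K) (hFdef : F = PowerSeries.mk fun n => f n / qFact q n)
    (Fk : ℕ → PowerSeries K) (hFk0 : Fk 0 = 1)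
    (hFkc : ∀ k, 0 < k → PowerSeries.constantCoeff (Fk k) = 0)
    (hFkrec : ∀ k, 0 < k → qDeriv q (Fk k) =
      PowerSeries.C (qInt q k * (q ^ (k - 1))⁻¹) *
        PowerSeries.rescale q (Fk (k - 1)) * qDeriv q F) :
    ∀ n, γ n / qFact q n = ∑ k ∈ Finset.range (n + 1),
      q ^ Nat.choose k 2 / qFact q k * PowerSeries.coeff n (Fk k) := by
  have hγγ : ∀ n, γ n = gammaVal q ω n := by
    intro n
    rw [hγ n, gammaVal]
    exact sum_perm_eq n (fun w => ω w * q ^ noninvCount w)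
  have hff : ∀ m, 1 ≤ m → f m = fVal q ω m := by
    intro m hm
    rw [hf m, fVal]
    exact sum_basic_eq m hm (fun w => ω w * q ^ noninvCount w)
  have hmain : ∀ n, γ n / qFact q n = Rsum q Fk n := by
    intro n
    induction n using Nat.strong_induction_on with
    | _ n ih =>
      match n with
      | 0 =>
          rw [Rsum_zero_coeff q Fk hFk0, hFk0]
          have hω : ω [] = 1 := by
            rw [hmult [] List.nodup_nil]
            simp
          have hγ0 : γ 0 = 1 := by
            rw [hγ 0]
            have hw : ∀ π : Equiv.Perm (Fin 0), wordOf π = [] := fun π => rfl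
            simp [hw, noninvCount, hω]
          rw [hγ0, qFact_zero, PowerSeries.coeff_zero_eq_constantCoeff]
          simp
      | n + 1 =>
          have hcomb := comb_rec q ω hred hmult hq n
          have halg := Rsum_rec q F Fk hq0 hq f hFdef hFk0 hFkc hFkrec n
          have hstep : γ (n + 1) / qFact q n = qInt q (n + 1) * Rsum q Fk (n + 1) := by
            calc γ (n + 1) / qFact q n = gammaVal q ω (n + 1) / qFact q n := by rw [hγγ]
              _ = ∑ i ∈ Finset.range (n + 1), (gammaVal q ω i / qFact q i) * q ^ i *
                    (fVal q ω (n - i + 1) / qFact q (n - i)) := hcomb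
              _ = ∑ i ∈ Finset.range (n + 1), Rsum q Fk i * q ^ i *
                    (f (n - i + 1) / qFact q (n - i)) := by
                  apply Finset.sum_congr rfl
                  intro i hi2
                  rw [Finset.mem_range] at hi2
                  rw [← hγγ i, ih i (by omega), ← hff (n - i + 1) (by omega)]
              _ = qInt q (n + 1) * Rsum q Fk (n + 1) := halg.symm
          have h1 := hq (n + 1) (by omega)
          rw [qFact_succ, div_mul_eq_div_div, hstep, mul_comm, mul_div_assoc, div_self h1,
            mul_one]
  intro n
  exact hmain n
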